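/- arXiv:2410.14163 — 3 statements merged into one kernel-verified Lean document; each statement's English description precedes it below -/
import Mathlib

section
/- Let q1, q2, a1, a2, b1, b2, c1, c2 be real numbers and let S = {(x, y) ∈ [0,1]² : q1·x·y + a1·x + b1·y + c1 = 0 and q2·x·y + a2·x + b2·y + c2 = 0}. Assume S is nonempty and the two constraints are independent, i.e., there is no real number μ with (q1, a1, b1, c1) = μ·(q2, a2, b2, c2). Then there exists a set T ⊆ ℝ² with at most 3 elements such that conv(S) = ⋂_{λ ∈ T} conv(S_λ). -/
open Set
set_option maxHeartbeats 4000000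


private lemma aux_nonneg {G W : ℝ} (h : 0 ≤ G * W) (hW : 0 < W) : 0 ≤ G := by nlinarith
private lemma aux_nonpos {G W : ℝ} (h : G * W ≤ 0) (hW : 0 < W) : G ≤ 0 := by nlinarith

private lemma Kx_ge (Q A B C : ℝ) (hw : ∀ t ∈ Icc (0:ℝ) 1, 0 < Q*t + B)
    (hD : 0 ≤ Q*(A*B - Q*C)) :
    Convex ℝ {p : ℝ×ℝ | p.1 ∈ Icc (0:ℝ) 1 ∧ 0 ≤ Q*p.1*p.2 + A*p.1 + B*p.2 + C} := by
  intro p hp q hq a b ha hb hab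
  simp only [Set.mem_setOf_eq] at hp hq ⊢
  obtain ⟨hp1, hp2⟩ := hp; obtain ⟨hq1, hq2⟩ := hq
  have hb' : b = 1 - a := by linarith
  subst hb'
  have hz1 : a*p.1 + (1-a)*q.1 ∈ Icc (0:ℝ) 1 := by
    constructor
    · nlinarith [hp1.1, hq1.1]
    · nlinarith [hp1.2, hq1.2]
  have hco : (a • p + (1-a) • q).1 = a*p.1 + (1-a)*q.1 := by
    simp [Prod.fst_add, Prod.smul_fst, smul_eq_mul]
  have hco2 : (a • p + (1-a) • q).2 = a*p.2 + (1-a)*q.2 := by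
    simp [Prod.snd_add, Prod.smul_snd, smul_eq_mul]
  rw [hco, hco2]
  refine ⟨hz1, ?_⟩
  have hwp := hw p.1 hp1
  have hwq := hw q.1 hq1
  have hwz := hw _ hz1
  have h1 : 0 ≤ (Q*p.1+B)*p.2 + A*p.1 + C := by nlinarith
  have h2 : 0 ≤ (Q*q.1+B)*q.2 + A*q.1 + C := by nlinarith
  have hE : 0 ≤ (Q*(a*p.1+(1-a)*q.1)*(a*p.2+(1-a)*q.2) + A*(a*p.1+(1-a)*q.1) + B*(a*p.2+(1-a)*q.2) + C) * ((Q*p.1+B)*(Q*q.1+B)) := by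
    have hid : (Q*(a*p.1+(1-a)*q.1)*(a*p.2+(1-a)*q.2) + A*(a*p.1+(1-a)*q.1) + B*(a*p.2+(1-a)*q.2) + C) * ((Q*p.1+B)*(Q*q.1+B))
        = a*((Q*q.1+B)*(Q*(a*p.1+(1-a)*q.1)+B))*((Q*p.1+B)*p.2 + A*p.1 + C)
          + (1-a)*((Q*p.1+B)*(Q*(a*p.1+(1-a)*q.1)+B))*((Q*q.1+B)*q.2 + A*q.1 + C)
          + (a*(1-a)*(p.1-q.1)^2)*(Q*(A*B-Q*C)) := by ring
    rw [hid]
    have t1 : 0 ≤ a*((Q*q.1+B)*(Q*(a*p.1+(1-a)*q.1)+B))*((Q*p.1+B)*p.2 + A*p.1 + C) :=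
      mul_nonneg (mul_nonneg ha (mul_pos hwq hwz).le) h1
    have t2 : 0 ≤ (1-a)*((Q*p.1+B)*(Q*(a*p.1+(1-a)*q.1)+B))*((Q*q.1+B)*q.2 + A*q.1 + C) :=
      mul_nonneg (mul_nonneg hb (mul_pos hwp hwz).le) h2
    have t3 : 0 ≤ (a*(1-a)*(p.1-q.1)^2)*(Q*(A*B-Q*C)) :=
      mul_nonneg (mul_nonneg (mul_nonneg ha hb) (sq_nonneg _)) hD
    linarith
  exact aux_nonneg hE (mul_pos hwp hwq)


private lemma Kx_le (Q A B C : ℝ) (hw : ∀ t ∈ Icc (0:ℝ) 1, 0 < Q*t + B)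
    (hD : Q*(A*B - Q*C) ≤ 0) :
    Convex ℝ {p : ℝ×ℝ | p.1 ∈ Icc (0:ℝ) 1 ∧ Q*p.1*p.2 + A*p.1 + B*p.2 + C ≤ 0} := by
  intro p hp q hq a b ha hb hab
  simp only [Set.mem_setOf_eq] at hp hq ⊢
  obtain ⟨hp1, hp2⟩ := hp; obtain ⟨hq1, hq2⟩ := hq
  have hb' : b = 1 - a := by linarith
  subst hb'
  have hz1 : a*p.1 + (1-a)*q.1 ∈ Icc (0:ℝ) 1 := by
    constructor
    · nlinarith [hp1.1, hq1.1]
    · nlinarith [hp1.2, hq1.2]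
  have hco : (a • p + (1-a) • q).1 = a*p.1 + (1-a)*q.1 := by
    simp [Prod.fst_add, Prod.smul_fst, smul_eq_mul]
  have hco2 : (a • p + (1-a) • q).2 = a*p.2 + (1-a)*q.2 := by
    simp [Prod.snd_add, Prod.smul_snd, smul_eq_mul]
  rw [hco, hco2]
  refine ⟨hz1, ?_⟩
  have hwp := hw p.1 hp1
  have hwq := hw q.1 hq1
  have hwz := hw _ hz1
  have h1 : (Q*p.1+B)*p.2 + A*p.1 + C ≤ 0 := by nlinarith
  have h2 : (Q*q.1+B)*q.2 + A*q.1 + C ≤ 0 := by nlinarith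
  have hE : (Q*(a*p.1+(1-a)*q.1)*(a*p.2+(1-a)*q.2) + A*(a*p.1+(1-a)*q.1) + B*(a*p.2+(1-a)*q.2) + C) * ((Q*p.1+B)*(Q*q.1+B)) ≤ 0 := by
    have hid : (Q*(a*p.1+(1-a)*q.1)*(a*p.2+(1-a)*q.2) + A*(a*p.1+(1-a)*q.1) + B*(a*p.2+(1-a)*q.2) + C) * ((Q*p.1+B)*(Q*q.1+B))
        = a*((Q*q.1+B)*(Q*(a*p.1+(1-a)*q.1)+B))*((Q*p.1+B)*p.2 + A*p.1 + C)
          + (1-a)*((Q*p.1+B)*(Q*(a*p.1+(1-a)*q.1)+B))*((Q*q.1+B)*q.2 + A*q.1 + C)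
          + (a*(1-a)*(p.1-q.1)^2)*(Q*(A*B-Q*C)) := by ring
    rw [hid]
    have t1 := mul_nonpos_of_nonneg_of_nonpos (mul_nonneg ha (mul_pos hwq hwz).le) h1
    have t2 := mul_nonpos_of_nonneg_of_nonpos (mul_nonneg hb (mul_pos hwp hwz).le) h2
    have t3 := mul_nonpos_of_nonneg_of_nonpos (mul_nonneg (mul_nonneg ha hb) (sq_nonneg (p.1-q.1))) hD
    linarith
  exact aux_nonpos hE (mul_pos hwp hwq)

private lemma Ky_ge (Q A B C : ℝ) (hw : ∀ t ∈ Icc (0:ℝ) 1, 0 < Q*t + A)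
    (hD : 0 ≤ Q*(A*B - Q*C)) :
    Convex ℝ {p : ℝ×ℝ | p.2 ∈ Icc (0:ℝ) 1 ∧ 0 ≤ Q*p.1*p.2 + A*p.1 + B*p.2 + C} := by
  intro p hp q hq a b ha hb hab
  simp only [Set.mem_setOf_eq] at hp hq ⊢
  obtain ⟨hp1, hp2⟩ := hp; obtain ⟨hq1, hq2⟩ := hq
  have hb' : b = 1 - a := by linarith
  subst hb'
  have hz1 : a*p.2 + (1-a)*q.2 ∈ Icc (0:ℝ) 1 := by
    constructor
    · nlinarith [hp1.1, hq1.1]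
    · nlinarith [hp1.2, hq1.2]
  have hco : (a • p + (1-a) • q).1 = a*p.1 + (1-a)*q.1 := by
    simp [Prod.fst_add, Prod.smul_fst, smul_eq_mul]
  have hco2 : (a • p + (1-a) • q).2 = a*p.2 + (1-a)*q.2 := by
    simp [Prod.snd_add, Prod.smul_snd, smul_eq_mul]
  rw [hco, hco2]
  refine ⟨hz1, ?_⟩
  have hwp := hw p.2 hp1
  have hwq := hw q.2 hq1
  have hwz := hw _ hz1
  have h1 : 0 ≤ (Q*p.2+A)*p.1 + B*p.2 + C := by nlinarith
  have h2 : 0 ≤ (Q*q.2+A)*q.1 + B*q.2 + C := by nlinarith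
  have hE : 0 ≤ (Q*(a*p.1+(1-a)*q.1)*(a*p.2+(1-a)*q.2) + A*(a*p.1+(1-a)*q.1) + B*(a*p.2+(1-a)*q.2) + C) * ((Q*p.2+A)*(Q*q.2+A)) := by
    have hid : (Q*(a*p.1+(1-a)*q.1)*(a*p.2+(1-a)*q.2) + A*(a*p.1+(1-a)*q.1) + B*(a*p.2+(1-a)*q.2) + C) * ((Q*p.2+A)*(Q*q.2+A))
        = a*((Q*q.2+A)*(Q*(a*p.2+(1-a)*q.2)+A))*((Q*p.2+A)*p.1 + B*p.2 + C)
          + (1-a)*((Q*p.2+A)*(Q*(a*p.2+(1-a)*q.2)+A))*((Q*q.2+A)*q.1 + B*q.2 + C)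
          + (a*(1-a)*(p.2-q.2)^2)*(Q*(A*B-Q*C)) := by ring
    rw [hid]
    have t1 : 0 ≤ a*((Q*q.2+A)*(Q*(a*p.2+(1-a)*q.2)+A))*((Q*p.2+A)*p.1 + B*p.2 + C) :=
      mul_nonneg (mul_nonneg ha (mul_pos hwq hwz).le) h1
    have t2 : 0 ≤ (1-a)*((Q*p.2+A)*(Q*(a*p.2+(1-a)*q.2)+A))*((Q*q.2+A)*q.1 + B*q.2 + C) :=
      mul_nonneg (mul_nonneg hb (mul_pos hwp hwz).le) h2
    have t3 : 0 ≤ (a*(1-a)*(p.2-q.2)^2)*(Q*(A*B-Q*C)) :=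
      mul_nonneg (mul_nonneg (mul_nonneg ha hb) (sq_nonneg _)) hD
    linarith
  exact aux_nonneg hE (mul_pos hwp hwq)

private lemma Ky_le (Q A B C : ℝ) (hw : ∀ t ∈ Icc (0:ℝ) 1, 0 < Q*t + A)
    (hD : Q*(A*B - Q*C) ≤ 0) :
    Convex ℝ {p : ℝ×ℝ | p.2 ∈ Icc (0:ℝ) 1 ∧ Q*p.1*p.2 + A*p.1 + B*p.2 + C ≤ 0} := by
  intro p hp q hq a b ha hb hab
  simp only [Set.mem_setOf_eq] at hp hq ⊢
  obtain ⟨hp1, hp2⟩ := hp; obtain ⟨hq1, hq2⟩ := hq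
  have hb' : b = 1 - a := by linarith
  subst hb'
  have hz1 : a*p.2 + (1-a)*q.2 ∈ Icc (0:ℝ) 1 := by
    constructor
    · nlinarith [hp1.1, hq1.1]
    · nlinarith [hp1.2, hq1.2]
  have hco : (a • p + (1-a) • q).1 = a*p.1 + (1-a)*q.1 := by
    simp [Prod.fst_add, Prod.smul_fst, smul_eq_mul]
  have hco2 : (a • p + (1-a) • q).2 = a*p.2 + (1-a)*q.2 := by
    simp [Prod.snd_add, Prod.smul_snd, smul_eq_mul]
  rw [hco, hco2]
  refine ⟨hz1, ?_⟩
  have hwp := hw p.2 hp1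
  have hwq := hw q.2 hq1
  have hwz := hw _ hz1
  have h1 : (Q*p.2+A)*p.1 + B*p.2 + C ≤ 0 := by nlinarith
  have h2 : (Q*q.2+A)*q.1 + B*q.2 + C ≤ 0 := by nlinarith
  have hE : (Q*(a*p.1+(1-a)*q.1)*(a*p.2+(1-a)*q.2) + A*(a*p.1+(1-a)*q.1) + B*(a*p.2+(1-a)*q.2) + C) * ((Q*p.2+A)*(Q*q.2+A)) ≤ 0 := by
    have hid : (Q*(a*p.1+(1-a)*q.1)*(a*p.2+(1-a)*q.2) + A*(a*p.1+(1-a)*q.1) + B*(a*p.2+(1-a)*q.2) + C) * ((Q*p.2+A)*(Q*q.2+A))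
        = a*((Q*q.2+A)*(Q*(a*p.2+(1-a)*q.2)+A))*((Q*p.2+A)*p.1 + B*p.2 + C)
          + (1-a)*((Q*p.2+A)*(Q*(a*p.2+(1-a)*q.2)+A))*((Q*q.2+A)*q.1 + B*q.2 + C)
          + (a*(1-a)*(p.2-q.2)^2)*(Q*(A*B-Q*C)) := by ring
    rw [hid]
    have t1 := mul_nonpos_of_nonneg_of_nonpos (mul_nonneg ha (mul_pos hwq hwz).le) h1
    have t2 := mul_nonpos_of_nonneg_of_nonpos (mul_nonneg hb (mul_pos hwp hwz).le) h2
    have t3 := mul_nonpos_of_nonneg_of_nonpos (mul_nonneg (mul_nonneg ha hb) (sq_nonneg (p.2-q.2))) hD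
    linarith
  exact aux_nonpos hE (mul_pos hwp hwq)


/-- The box `[0,1]²`. -/
def unitSquare : Set (ℝ × ℝ) := {p | p.1 ∈ Icc (0:ℝ) 1 ∧ p.2 ∈ Icc (0:ℝ) 1}

/-- The set described by two bilinear bipartite equalities in the box. -/
def setS (q1 q2 a1 a2 b1 b2 c1 c2 : ℝ) : Set (ℝ × ℝ) :=
  {p ∈ unitSquare | q1 * p.1 * p.2 + a1 * p.1 + b1 * p.2 + c1 = 0 ∧
    q2 * p.1 * p.2 + a2 * p.1 + b2 * p.2 + c2 = 0}

/-- The aggregated set with weights `l = (λ₁, λ₂)`. -/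
def setAgg (q1 q2 a1 a2 b1 b2 c1 c2 : ℝ) (l : ℝ × ℝ) : Set (ℝ × ℝ) :=
  {p ∈ unitSquare |
    l.1 * (q1 * p.1 * p.2 + a1 * p.1 + b1 * p.2 + c1) +
      l.2 * (q2 * p.1 * p.2 + a2 * p.1 + b2 * p.2 + c2) = 0}

def coreS (q a b c al be ga : ℝ) : Set (ℝ × ℝ) :=
  {p | p ∈ unitSquare ∧ (q*p.1*p.2 + a*p.1 + b*p.2 + c = 0 ∧ al*p.1 + be*p.2 + ga = 0)}

def coreA (q a b c al be ga : ℝ) (w : ℝ × ℝ) : Set (ℝ × ℝ) :=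
  {p | p ∈ unitSquare ∧ w.1*(q*p.1*p.2 + a*p.1 + b*p.2 + c) + w.2*(al*p.1 + be*p.2 + ga) = 0}

lemma coreS_subset_coreA (q a b c al be ga : ℝ) (w : ℝ × ℝ) :
    coreS q a b c al be ga ⊆ coreA q a b c al be ga w := by
  rintro p ⟨h1, h2, h3⟩
  exact ⟨h1, by rw [h2, h3]; ring⟩

lemma card3 (x y z : ℝ×ℝ) : ({x, y, z} : Finset (ℝ×ℝ)).card ≤ 3 := by
  refine le_trans (Finset.card_insert_le _ _) ?_
  refine le_trans (Nat.succ_le_succ (Finset.card_insert_le _ _)) ?_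
  simp

lemma card2 (x y : ℝ×ℝ) : ({x, y} : Finset (ℝ×ℝ)).card ≤ 3 := by
  refine le_trans (Finset.card_insert_le _ _) ?_; simp

lemma sq_convex : Convex ℝ unitSquare := by
  intro p hp q hq a b ha hb hab
  constructor
  · have := (convex_Icc (0:ℝ) 1) hp.1 hq.1 ha hb hab
    simpa [Prod.fst_add, Prod.smul_fst, smul_eq_mul] using this
  · have := (convex_Icc (0:ℝ) 1) hp.2 hq.2 ha hb hab
    simpa [Prod.snd_add, Prod.smul_snd, smul_eq_mul] using this

/-- affine set: {p ∈ square | u*x + v*y + w = 0} is convex -/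
lemma affine_convex (u v w : ℝ) : Convex ℝ {p : ℝ×ℝ | p ∈ unitSquare ∧ u*p.1 + v*p.2 + w = 0} := by
  intro p hp q hq a b ha hb hab
  refine ⟨sq_convex hp.1 hq.1 ha hb hab, ?_⟩
  have e1 : (a • p + b • q).1 = a*p.1 + b*q.1 := by
    simp [Prod.fst_add, Prod.smul_fst, smul_eq_mul]
  have e2 : (a • p + b • q).2 = a*p.2 + b*q.2 := by
    simp [Prod.snd_add, Prod.smul_snd, smul_eq_mul]
  rw [e1, e2]
  linear_combination a*hp.2 + b*hq.2 - w*hab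


private lemma hw_of_bound (Q W : ℝ) (h : 1 + |Q| ≤ W) : ∀ t ∈ Icc (0:ℝ) 1, 0 < Q*t + W := by
  intro t ht
  have h1 := mul_le_mul_of_nonneg_right (neg_abs_le Q) ht.1
  have h2 := mul_le_of_le_one_right (abs_nonneg Q) ht.2
  nlinarith

private lemma exists_two (d1 d2 h1 h2 : ℝ) (hd1 : 0 < d1) (hd2 : 0 < d2) :
    ∃ s : ℝ, h1 ≤ d1*s ∧ h2 ≤ d2*s := by
  refine ⟨max (h1/d1) (h2/d2), ?_, ?_⟩
  · rw [← div_le_iff₀' hd1]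
    exact le_max_left _ _
  · rw [← div_le_iff₀' hd2]
    exact le_max_right _ _

private lemma exists_quad (c2 c1 c0 d1 d0 : ℝ) (h2 : 0 < c2) (hd : 0 < d1) :
    ∃ s : ℝ, 0 ≤ c2*s^2 + c1*s + c0 ∧ d0 ≤ d1*s := by
  obtain ⟨s0, hs1, hs2⟩ := exists_two d1 c2 d0 (1 + |c1| + |c0|) hd h2
  set s := max s0 1 with hsdef
  have hle : s0 ≤ s := le_max_left _ _
  have hs3 : (1:ℝ) ≤ s := le_max_right _ _
  have hs1' : d0 ≤ d1*s := le_trans hs1 (mul_le_mul_of_nonneg_left hle hd.le)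
  have hs2' : 1 + |c1| + |c0| ≤ c2*s := le_trans hs2 (mul_le_mul_of_nonneg_left hle h2.le)
  refine ⟨s, ?_, hs1'⟩
  have h4 : 0 ≤ (c2*s - (1 + |c1| + |c0|)) * s := by
    apply mul_nonneg (by linarith) (by linarith)

  nlinarith [le_abs_self c1, neg_abs_le c1, le_abs_self c0, neg_abs_le c0,
    mul_le_mul_of_nonneg_right (neg_abs_le c1) (by linarith : (0:ℝ) ≤ s)]


lemma coreA_mem (q a b c al be ga w1 w2 : ℝ) (p : ℝ×ℝ) :
    p ∈ coreA q a b c al be ga (w1, w2) ↔ p ∈ unitSquare ∧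
      w1*(q*p.1*p.2 + a*p.1 + b*p.2 + c) + w2*(al*p.1 + be*p.2 + ga) = 0 := Iff.rfl

private lemma eps_abs {ε q : ℝ} (hε : ε = 1 ∨ ε = -1) : |ε*q| = |q| := by
  rcases hε with h | h <;> rw [h] <;> simp

private lemma solve2 (u1 v1 u2 v2 : ℝ) (h : 0 < v1*v2) : ∃ s, u1 ≤ v1*s ∧ u2 ≤ v2*s := by
  rcases lt_trichotomy v1 0 with h1 | h1 | h1
  · have h2 : v2 < 0 := by nlinarith
    obtain ⟨t, ht1, ht2⟩ := exists_two (-v1) (-v2) u1 u2 (by linarith) (by linarith)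
    exact ⟨-t, by nlinarith, by nlinarith⟩
  · exfalso; rw [h1] at h; simp at h
  · have h2 : 0 < v2 := by nlinarith
    exact exists_two v1 v2 u1 u2 h1 h2

private lemma member_x (q a b c al be ga ε s dir : ℝ) (hε : ε = 1 ∨ ε = -1) (hdir : dir = 1 ∨ dir = -1)
    (hw : 1 + |q| ≤ ε*(b + s*be))
    (hD : 0 ≤ dir * ε * (q*((a+s*al)*(b+s*be) - q*(c+s*ga)))) :
    ∃ C : Set (ℝ×ℝ), Convex ℝ C ∧ coreA q a b c al be ga (ε, ε*s) ⊆ C ∧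
      ∀ z ∈ C, al*z.1 + be*z.2 + ga = 0 →
        0 ≤ dir * ε * (q*z.1*z.2 + a*z.1 + b*z.2 + c) := by
  have habs : (1:ℝ) + |ε*q| ≤ ε*(b+s*be) := by rw [eps_abs hε]; exact hw
  have hDm : (ε*q)*((ε*(a+s*al))*(ε*(b+s*be)) - (ε*q)*(ε*(c+s*ga)))
      = ε * (q*((a+s*al)*(b+s*be) - q*(c+s*ga))) := by
    rcases hε with h|h <;> rw [h] <;> ring
  rcases hdir with hd | hd
  · rw [hd] at hD
    refine ⟨{p : ℝ×ℝ | p.1 ∈ Icc (0:ℝ) 1 ∧ 0 ≤ (ε*q)*p.1*p.2 + (ε*(a+s*al))*p.1 + (ε*(b+s*be))*p.2 + (ε*(c+s*ga))}, ?_, ?_, ?_⟩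
    · apply Kx_ge _ _ _ _ (hw_of_bound _ _ habs)
      rw [hDm]; linarith
    · rintro p ⟨hp1, hp2⟩
      refine ⟨hp1.1, ?_⟩
      have : (ε*q)*p.1*p.2 + (ε*(a+s*al))*p.1 + (ε*(b+s*be))*p.2 + (ε*(c+s*ga)) = 0 := by
        linear_combination hp2
      linarith [this.ge]
    · rintro z ⟨hz1, hz2⟩ hgz
      rw [hd, one_mul]
      have key : (ε*q)*z.1*z.2 + (ε*(a+s*al))*z.1 + (ε*(b+s*be))*z.2 + (ε*(c+s*ga))
          = ε*(q*z.1*z.2 + a*z.1 + b*z.2 + c) + (ε*s)*(al*z.1 + be*z.2 + ga) := by ring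
      rw [hgz, mul_zero, add_zero] at key
      linarith [key ▸ hz2]
  · rw [hd] at hD
    refine ⟨{p : ℝ×ℝ | p.1 ∈ Icc (0:ℝ) 1 ∧ (ε*q)*p.1*p.2 + (ε*(a+s*al))*p.1 + (ε*(b+s*be))*p.2 + (ε*(c+s*ga)) ≤ 0}, ?_, ?_, ?_⟩
    · apply Kx_le _ _ _ _ (hw_of_bound _ _ habs)
      rw [hDm]; linarith
    · rintro p ⟨hp1, hp2⟩
      refine ⟨hp1.1, ?_⟩
      have : (ε*q)*p.1*p.2 + (ε*(a+s*al))*p.1 + (ε*(b+s*be))*p.2 + (ε*(c+s*ga)) = 0 := by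
        linear_combination hp2
      linarith [this.le]
    · rintro z ⟨hz1, hz2⟩ hgz
      have key : (ε*q)*z.1*z.2 + (ε*(a+s*al))*z.1 + (ε*(b+s*be))*z.2 + (ε*(c+s*ga))
          = ε*(q*z.1*z.2 + a*z.1 + b*z.2 + c) + (ε*s)*(al*z.1 + be*z.2 + ga) := by ring
      rw [hgz, mul_zero, add_zero] at key
      have h0 : ε*(q*z.1*z.2 + a*z.1 + b*z.2 + c) ≤ 0 := key ▸ hz2
      nlinarith [h0]

private lemma member_y (q a b c al be ga ε s dir : ℝ) (hε : ε = 1 ∨ ε = -1) (hdir : dir = 1 ∨ dir = -1)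
    (hw : 1 + |q| ≤ ε*(a + s*al))
    (hD : 0 ≤ dir * ε * (q*((a+s*al)*(b+s*be) - q*(c+s*ga)))) :
    ∃ C : Set (ℝ×ℝ), Convex ℝ C ∧ coreA q a b c al be ga (ε, ε*s) ⊆ C ∧
      ∀ z ∈ C, al*z.1 + be*z.2 + ga = 0 →
        0 ≤ dir * ε * (q*z.1*z.2 + a*z.1 + b*z.2 + c) := by
  have habs : (1:ℝ) + |ε*q| ≤ ε*(a+s*al) := by rw [eps_abs hε]; exact hw
  have hDm : (ε*q)*((ε*(a+s*al))*(ε*(b+s*be)) - (ε*q)*(ε*(c+s*ga)))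
      = ε * (q*((a+s*al)*(b+s*be) - q*(c+s*ga))) := by
    rcases hε with h|h <;> rw [h] <;> ring
  rcases hdir with hd | hd
  · rw [hd] at hD
    refine ⟨{p : ℝ×ℝ | p.2 ∈ Icc (0:ℝ) 1 ∧ 0 ≤ (ε*q)*p.1*p.2 + (ε*(a+s*al))*p.1 + (ε*(b+s*be))*p.2 + (ε*(c+s*ga))}, ?_, ?_, ?_⟩
    · apply Ky_ge _ _ _ _ (hw_of_bound _ _ habs)
      rw [hDm]; linarith
    · rintro p ⟨hp1, hp2⟩
      refine ⟨hp1.2, ?_⟩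
      have : (ε*q)*p.1*p.2 + (ε*(a+s*al))*p.1 + (ε*(b+s*be))*p.2 + (ε*(c+s*ga)) = 0 := by
        linear_combination hp2
      linarith [this.ge]
    · rintro z ⟨hz1, hz2⟩ hgz
      rw [hd, one_mul]
      have key : (ε*q)*z.1*z.2 + (ε*(a+s*al))*z.1 + (ε*(b+s*be))*z.2 + (ε*(c+s*ga))
          = ε*(q*z.1*z.2 + a*z.1 + b*z.2 + c) + (ε*s)*(al*z.1 + be*z.2 + ga) := by ring
      rw [hgz, mul_zero, add_zero] at key
      linarith [key ▸ hz2]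
  · rw [hd] at hD
    refine ⟨{p : ℝ×ℝ | p.2 ∈ Icc (0:ℝ) 1 ∧ (ε*q)*p.1*p.2 + (ε*(a+s*al))*p.1 + (ε*(b+s*be))*p.2 + (ε*(c+s*ga)) ≤ 0}, ?_, ?_, ?_⟩
    · apply Ky_le _ _ _ _ (hw_of_bound _ _ habs)
      rw [hDm]; linarith
    · rintro p ⟨hp1, hp2⟩
      refine ⟨hp1.2, ?_⟩
      have : (ε*q)*p.1*p.2 + (ε*(a+s*al))*p.1 + (ε*(b+s*be))*p.2 + (ε*(c+s*ga)) = 0 := by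
        linear_combination hp2
      linarith [this.le]
    · rintro z ⟨hz1, hz2⟩ hgz
      have key : (ε*q)*z.1*z.2 + (ε*(a+s*al))*z.1 + (ε*(b+s*be))*z.2 + (ε*(c+s*ga))
          = ε*(q*z.1*z.2 + a*z.1 + b*z.2 + c) + (ε*s)*(al*z.1 + be*z.2 + ga) := by ring
      rw [hgz, mul_zero, add_zero] at key
      have h0 : ε*(q*z.1*z.2 + a*z.1 + b*z.2 + c) ≤ 0 := key ▸ hz2
      nlinarith [h0]

private lemma core_line (q a b c al be ga : ℝ)
    (hS : coreS q a b c al be ga = {p : ℝ×ℝ | p ∈ unitSquare ∧ al*p.1 + be*p.2 + ga = 0}) :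
    ∃ T : Finset (ℝ×ℝ), T.card ≤ 3 ∧
      convexHull ℝ (coreS q a b c al be ga) =
        ⋂ w ∈ T, convexHull ℝ (coreA q a b c al be ga w) := by
  refine ⟨{((0:ℝ),(1:ℝ))}, by simp, ?_⟩
  have hA : coreA q a b c al be ga (0,1) = {p : ℝ×ℝ | p ∈ unitSquare ∧ al*p.1+be*p.2+ga = 0} := by
    ext p
    rw [coreA_mem]
    constructor
    · rintro ⟨h,e⟩; exact ⟨h, by linear_combination e⟩
    · rintro ⟨h,e⟩; exact ⟨h, by linear_combination e⟩
  simp only [Finset.mem_singleton, Set.iInter_iInter_eq_left]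
  rw [hS, hA]

private lemma core_caseH (q a b c al be ga : ℝ) (hq : q ≠ 0) (hbe : be ≠ 0) (hal : al = 0)
    (hne : (coreS q a b c al be ga).Nonempty) :
    ∃ T : Finset (ℝ×ℝ), T.card ≤ 3 ∧
      convexHull ℝ (coreS q a b c al be ga) =
        ⋂ w ∈ T, convexHull ℝ (coreA q a b c al be ga w) := by
  subst hal
  obtain ⟨z0, hz0sq, hf0, hg0⟩ := hne
  by_cases hBG : a*be - q*ga = 0
  · -- S is the full line segment
    apply core_line
    have hCG : c*be - b*ga = 0 := by linear_combination be*hf0 - (q*z0.1+b)*hg0 - z0.1*hBG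
    ext p
    constructor
    · rintro ⟨h1, _, h3⟩; exact ⟨h1, h3⟩
    · rintro ⟨h1, h3⟩
      refine ⟨h1, ?_, h3⟩
      have hbf : be*(q*p.1*p.2 + a*p.1 + b*p.2 + c) = 0 := by
        linear_combination p.1*hBG + hCG + (q*p.1+b)*h3
      exact (mul_eq_zero.1 hbf).resolve_left hbe
  · -- single point, three members
    set BG := a*be - q*ga with hBGdef
    set D0 := q*(a*b - q*c) with hD0def
    have hqBG : q*BG ≠ 0 := mul_ne_zero hq hBG
    by_cases hsgn : 0 < q*BG*be
    all_goals {
      first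
      | (have hdir : (1:ℝ) = 1 ∨ (1:ℝ) = -1 := Or.inl rfl
         have hprod : 0 < be*((1:ℝ)*(q*BG)) := by nlinarith [hsgn]
         set dir := (1:ℝ) with hdirdef)
      | (have hsgn' : q*BG*be < 0 := by
           rcases lt_trichotomy (q*BG*be) 0 with h|h|h
           · exact h
           · exact absurd h (by intro hh; exact (mul_ne_zero hqBG hbe) hh)
           · exact absurd h hsgn
         have hdir : (-1:ℝ) = 1 ∨ (-1:ℝ) = -1 := Or.inr rfl
         have hprod : 0 < be*((-1:ℝ)*(q*BG)) := by nlinarith [hsgn']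
         set dir := (-1:ℝ) with hdirdef)
      obtain ⟨s1, hs1w, hs1D⟩ := solve2 (1 + |q| - b) be (-(dir*D0)) (dir*(q*BG)) hprod
      obtain ⟨s2, hs2w, hs2D⟩ := solve2 (1 + |q| + b) (-be) (dir*D0) (-(dir*(q*BG)))
        (by nlinarith [hprod])
      obtain ⟨C1, hC1conv, hC1sub, hC1ex⟩ := member_x q a b c 0 be ga 1 s1 dir (Or.inl rfl) hdir
        (by nlinarith [hs1w]) (by
          have e : q*((a+s1*0)*(b+s1*be) - q*(c+s1*ga)) = D0 + s1*(q*BG) := by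
            rw [hD0def, hBGdef]; ring
          rw [e]; nlinarith [hs1D])
      obtain ⟨C2, hC2conv, hC2sub, hC2ex⟩ := member_x q a b c 0 be ga (-1) s2 dir (Or.inr rfl) hdir
        (by nlinarith [hs2w]) (by
          have e : q*((a+s2*0)*(b+s2*be) - q*(c+s2*ga)) = D0 + s2*(q*BG) := by
            rw [hD0def, hBGdef]; ring
          rw [e]; nlinarith [hs2D])
      refine ⟨{((0:ℝ),(1:ℝ)), ((1:ℝ), 1*s1), ((-1:ℝ), -1*s2)}, card3 _ _ _, ?_⟩
      apply Set.Subset.antisymm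
      · apply Set.subset_iInter₂
        intro w _
        exact convexHull_mono (coreS_subset_coreA _ _ _ _ _ _ _ w)
      · intro z hz
        rw [Set.mem_iInter₂] at hz
        have hzg := hz (0,1) (Finset.mem_insert_self _ _)
        have hz1 := hz (1, 1*s1) (Finset.mem_insert_of_mem (Finset.mem_insert_self _ _))
        have hz2 := hz (-1, -1*s2) (Finset.mem_insert_of_mem (Finset.mem_insert_of_mem (Finset.mem_singleton_self _)))
        have hAg : coreA q a b c 0 be ga (0,1) = {p : ℝ×ℝ | p ∈ unitSquare ∧ 0*p.1 + be*p.2 + ga = 0} := by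
          ext p
          rw [coreA_mem]
          constructor
          · rintro ⟨h,e⟩; exact ⟨h, by linear_combination e⟩
          · rintro ⟨h,e⟩; exact ⟨h, by linear_combination e⟩
        rw [hAg, (affine_convex 0 be ga).convexHull_eq] at hzg
        obtain ⟨hzsq, hzline⟩ := hzg
        have h1 := hC1ex z (convexHull_min hC1sub hC1conv hz1) hzline
        have h2 := hC2ex z (convexHull_min hC2sub hC2conv hz2) hzline
        have hfz : q*z.1*z.2 + a*z.1 + b*z.2 + c = 0 := by nlinarith [h1, h2]
        exact subset_convexHull ℝ _ ⟨hzsq, hfz, hzline⟩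
    }

private lemma core_caseV (q a b c al be ga : ℝ) (hq : q ≠ 0) (hbe : be = 0) (hal : al ≠ 0)
    (hne : (coreS q a b c al be ga).Nonempty) :
    ∃ T : Finset (ℝ×ℝ), T.card ≤ 3 ∧
      convexHull ℝ (coreS q a b c al be ga) =
        ⋂ w ∈ T, convexHull ℝ (coreA q a b c al be ga w) := by
  subst hbe
  obtain ⟨z0, hz0sq, hf0, hg0⟩ := hne
  by_cases hBG : b*al - q*ga = 0
  · apply core_line
    have hCG : c*al - a*ga = 0 := by linear_combination al*hf0 - (q*z0.2+a)*hg0 - z0.2*hBG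
    ext p
    constructor
    · rintro ⟨h1, _, h3⟩; exact ⟨h1, h3⟩
    · rintro ⟨h1, h3⟩
      refine ⟨h1, ?_, h3⟩
      have hbf : al*(q*p.1*p.2 + a*p.1 + b*p.2 + c) = 0 := by
        linear_combination p.2*hBG + hCG + (q*p.2+a)*h3
      exact (mul_eq_zero.1 hbf).resolve_left hal
  · set BG := b*al - q*ga with hBGdef
    set D0 := q*(a*b - q*c) with hD0def
    have hqBG : q*BG ≠ 0 := mul_ne_zero hq hBG
    by_cases hsgn : 0 < q*BG*al
    all_goals {
      first
      | (have hdir : (1:ℝ) = 1 ∨ (1:ℝ) = -1 := Or.inl rfl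
         have hprod : 0 < al*((1:ℝ)*(q*BG)) := by nlinarith [hsgn]
         set dir := (1:ℝ) with hdirdef)
      | (have hsgn' : q*BG*al < 0 := by
           rcases lt_trichotomy (q*BG*al) 0 with h|h|h
           · exact h
           · exact absurd h (by intro hh; exact (mul_ne_zero hqBG hal) hh)
           · exact absurd h hsgn
         have hdir : (-1:ℝ) = 1 ∨ (-1:ℝ) = -1 := Or.inr rfl
         have hprod : 0 < al*((-1:ℝ)*(q*BG)) := by nlinarith [hsgn']
         set dir := (-1:ℝ) with hdirdef)
      obtain ⟨s1, hs1w, hs1D⟩ := solve2 (1 + |q| - a) al (-(dir*D0)) (dir*(q*BG)) hprod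
      obtain ⟨s2, hs2w, hs2D⟩ := solve2 (1 + |q| + a) (-al) (dir*D0) (-(dir*(q*BG)))
        (by nlinarith [hprod])
      obtain ⟨C1, hC1conv, hC1sub, hC1ex⟩ := member_y q a b c al 0 ga 1 s1 dir (Or.inl rfl) hdir
        (by nlinarith [hs1w]) (by
          have e : q*((a+s1*al)*(b+s1*0) - q*(c+s1*ga)) = D0 + s1*(q*BG) := by
            rw [hD0def, hBGdef]; ring
          rw [e]; nlinarith [hs1D])
      obtain ⟨C2, hC2conv, hC2sub, hC2ex⟩ := member_y q a b c al 0 ga (-1) s2 dir (Or.inr rfl) hdir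
        (by nlinarith [hs2w]) (by
          have e : q*((a+s2*al)*(b+s2*0) - q*(c+s2*ga)) = D0 + s2*(q*BG) := by
            rw [hD0def, hBGdef]; ring
          rw [e]; nlinarith [hs2D])
      refine ⟨{((0:ℝ),(1:ℝ)), ((1:ℝ), 1*s1), ((-1:ℝ), -1*s2)}, card3 _ _ _, ?_⟩
      apply Set.Subset.antisymm
      · apply Set.subset_iInter₂
        intro w _
        exact convexHull_mono (coreS_subset_coreA _ _ _ _ _ _ _ w)
      · intro z hz
        rw [Set.mem_iInter₂] at hz
        have hzg := hz (0,1) (Finset.mem_insert_self _ _)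
        have hz1 := hz (1, 1*s1) (Finset.mem_insert_of_mem (Finset.mem_insert_self _ _))
        have hz2 := hz (-1, -1*s2) (Finset.mem_insert_of_mem (Finset.mem_insert_of_mem (Finset.mem_singleton_self _)))
        have hAg : coreA q a b c al 0 ga (0,1) = {p : ℝ×ℝ | p ∈ unitSquare ∧ al*p.1 + 0*p.2 + ga = 0} := by
          ext p
          rw [coreA_mem]
          constructor
          · rintro ⟨h,e⟩; exact ⟨h, by linear_combination e⟩
          · rintro ⟨h,e⟩; exact ⟨h, by linear_combination e⟩
        rw [hAg, (affine_convex al 0 ga).convexHull_eq] at hzg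
        obtain ⟨hzsq, hzline⟩ := hzg
        have h1 := hC1ex z (convexHull_min hC1sub hC1conv hz1) hzline
        have h2 := hC2ex z (convexHull_min hC2sub hC2conv hz2) hzline
        have hfz : q*z.1*z.2 + a*z.1 + b*z.2 + c = 0 := by nlinarith [h1, h2]
        exact subset_convexHull ℝ _ ⟨hzsq, hfz, hzline⟩
    }


private lemma exists_quad_signed (c2 L K be u : ℝ) (hc2 : 0 < c2) (hbe : be ≠ 0) :
    ∃ s, 0 ≤ c2*s^2 + L*s + K ∧ u ≤ s*be := by
  rcases lt_or_gt_of_ne hbe with h | h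
  · obtain ⟨t, h1, h2⟩ := exists_quad c2 (-L) K (-be) u hc2 (by linarith)
    exact ⟨-t, by nlinarith, by nlinarith⟩
  · obtain ⟨t, h1, h2⟩ := exists_quad c2 L K be u hc2 h
    exact ⟨t, h1, by linarith [mul_comm be t]⟩


private lemma core_caseD2 (q a b c al be ga x2 y2 : ℝ) (z0 : ℝ×ℝ)
    (hq : q ≠ 0) (hbe : be ≠ 0) (hal : al ≠ 0)
    (hz0sq : z0 ∈ unitSquare) (hf0 : q*z0.1*z0.2 + a*z0.1 + b*z0.2 + c = 0)
    (hg0 : al*z0.1 + be*z0.2 + ga = 0)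
    (hgQ : al*x2 + be*y2 + ga = 0) (hfQ : q*x2*y2 + a*x2 + b*y2 + c = 0)
    (hQ : ¬(x2 ∈ Icc (0:ℝ) 1 ∧ y2 ∈ Icc (0:ℝ) 1)) :
    ∃ T : Finset (ℝ×ℝ), T.card ≤ 3 ∧
      convexHull ℝ (coreS q a b c al be ga) =
        ⋂ w ∈ T, convexHull ℝ (coreA q a b c al be ga w) := by
  by_cases hx2in : x2 ∈ Icc (0:ℝ) 1
  · -- y2 outside: vertical cross (x - z0.1)*(y - y2)
    have hy2out : y2 ∉ Icc (0:ℝ) 1 := fun h => hQ ⟨hx2in, h⟩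
    have hy2ne : y2 ≠ z0.2 := by
      intro h; exact hy2out (h ▸ hz0sq.2)
    obtain ⟨cst, hcst⟩ : ∃ v : ℝ, v = -(q*y2 + a)/al := ⟨_, rfl⟩
    have hxco : a + cst*al = -(q*y2) := by rw [hcst]; field_simp; ring
    have hV1 : (b + cst*be + q*z0.1)*z0.2 + (c + cst*ga - q*z0.1*y2) = 0 := by
      linear_combination hf0 + cst*hg0 - z0.1*hxco
    have hV2 : (b + cst*be + q*z0.1)*y2 + (c + cst*ga - q*z0.1*y2) = 0 := by
      linear_combination hfQ + cst*hgQ - x2*hxco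
    have hii : b + cst*be + q*z0.1 = 0 := by
      have hd : (b + cst*be + q*z0.1)*(z0.2 - y2) = 0 := by linear_combination hV1 - hV2
      refine (mul_eq_zero.1 hd).resolve_right (sub_ne_zero.2 (Ne.symm hy2ne))
    have hiii : c + cst*ga - q*z0.1*y2 = 0 := by linear_combination hV1 - z0.2*hii
    have hid : ∀ p : ℝ×ℝ, 1*(q*p.1*p.2 + a*p.1 + b*p.2 + c) + cst*(al*p.1 + be*p.2 + ga)
        = q*(p.1 - z0.1)*(p.2 - y2) := by
      intro p
      linear_combination p.1*hxco + p.2*hii + hiii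
    have hA : coreA q a b c al be ga (1, cst)
        = {p : ℝ×ℝ | p ∈ unitSquare ∧ 1*p.1 + 0*p.2 + (-z0.1) = 0} := by
      ext p
      rw [coreA_mem]
      constructor
      · rintro ⟨h, e⟩
        refine ⟨h, ?_⟩
        rw [hid p] at e
        have hy : p.2 - y2 ≠ 0 := by
          intro hcon
          exact hy2out (by rw [← sub_eq_zero.1 hcon]; exact h.2)
        have h1 := (mul_eq_zero.1 e).resolve_right hy
        have h2 := (mul_eq_zero.1 h1).resolve_left hq
        linarith [sub_eq_zero.1 h2]
      · rintro ⟨h, e⟩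
        refine ⟨h, ?_⟩
        rw [hid p]
        have : p.1 - z0.1 = 0 := by linarith
        rw [this]
        ring
    refine ⟨{((0:ℝ),(1:ℝ)), ((1:ℝ), cst)}, card2 _ _, ?_⟩
    apply Set.Subset.antisymm
    · apply Set.subset_iInter₂
      intro w _
      exact convexHull_mono (coreS_subset_coreA _ _ _ _ _ _ _ w)
    · intro z hz
      rw [Set.mem_iInter₂] at hz
      have hzg := hz (0,1) (Finset.mem_insert_self _ _)
      have hz1 := hz (1, cst) (Finset.mem_insert_of_mem (Finset.mem_singleton_self _))
      have hAg : coreA q a b c al be ga (0,1) = {p : ℝ×ℝ | p ∈ unitSquare ∧ al*p.1 + be*p.2 + ga = 0} := by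
        ext p
        rw [coreA_mem]
        constructor
        · rintro ⟨h,e⟩; exact ⟨h, by linear_combination e⟩
        · rintro ⟨h,e⟩; exact ⟨h, by linear_combination e⟩
      rw [hAg, (affine_convex al be ga).convexHull_eq] at hzg
      obtain ⟨hzsq, hzline⟩ := hzg
      rw [hA, (affine_convex 1 0 (-z0.1)).convexHull_eq] at hz1
      have hzx : z.1 = z0.1 := by linarith [hz1.2]
      have hzy : z.2 = z0.2 := by
        have h4 : be*(z.2 - z0.2) = 0 := by linear_combination hzline - hg0 - al*hzx
        have h5 := (mul_eq_zero.1 h4).resolve_left hbe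
        linarith [sub_eq_zero.1 h5]
      have : z = z0 := Prod.ext hzx hzy
      rw [this]
      exact subset_convexHull ℝ _ ⟨hz0sq, hf0, hg0⟩
  · -- x2 outside: horizontal cross (x - x2)*(y - z0.2)
    have hx2ne : x2 ≠ z0.1 := by
      intro h; exact hx2in (h ▸ hz0sq.1)
    obtain ⟨cst, hcst⟩ : ∃ v : ℝ, v = -(q*x2 + b)/be := ⟨_, rfl⟩
    have hyco : b + cst*be = -(q*x2) := by rw [hcst]; field_simp; ring
    have hU1 : (a + cst*al + q*z0.2)*z0.1 + (c + cst*ga - q*x2*z0.2) = 0 := by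
      linear_combination hf0 + cst*hg0 - z0.2*hyco
    have hU2 : (a + cst*al + q*z0.2)*x2 + (c + cst*ga - q*x2*z0.2) = 0 := by
      linear_combination hfQ + cst*hgQ - y2*hyco
    have hii : a + cst*al + q*z0.2 = 0 := by
      have hd : (a + cst*al + q*z0.2)*(z0.1 - x2) = 0 := by linear_combination hU1 - hU2
      refine (mul_eq_zero.1 hd).resolve_right (sub_ne_zero.2 (Ne.symm hx2ne))
    have hiii : c + cst*ga - q*x2*z0.2 = 0 := by linear_combination hU1 - z0.1*hii
    have hid : ∀ p : ℝ×ℝ, 1*(q*p.1*p.2 + a*p.1 + b*p.2 + c) + cst*(al*p.1 + be*p.2 + ga)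
        = q*(p.1 - x2)*(p.2 - z0.2) := by
      intro p
      linear_combination p.2*hyco + p.1*hii + hiii
    have hA : coreA q a b c al be ga (1, cst)
        = {p : ℝ×ℝ | p ∈ unitSquare ∧ 0*p.1 + 1*p.2 + (-z0.2) = 0} := by
      ext p
      rw [coreA_mem]
      constructor
      · rintro ⟨h, e⟩
        refine ⟨h, ?_⟩
        rw [hid p] at e
        have hx : p.1 - x2 ≠ 0 := by
          intro hcon
          exact hx2in (by rw [← sub_eq_zero.1 hcon]; exact h.1)
        have h1 := (mul_eq_zero.1 e).resolve_left (mul_ne_zero hq hx)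
        linarith [sub_eq_zero.1 h1]
      · rintro ⟨h, e⟩
        refine ⟨h, ?_⟩
        rw [hid p]
        have : p.2 - z0.2 = 0 := by linarith
        rw [this]
        ring
    refine ⟨{((0:ℝ),(1:ℝ)), ((1:ℝ), cst)}, card2 _ _, ?_⟩
    apply Set.Subset.antisymm
    · apply Set.subset_iInter₂
      intro w _
      exact convexHull_mono (coreS_subset_coreA _ _ _ _ _ _ _ w)
    · intro z hz
      rw [Set.mem_iInter₂] at hz
      have hzg := hz (0,1) (Finset.mem_insert_self _ _)
      have hz1 := hz (1, cst) (Finset.mem_insert_of_mem (Finset.mem_singleton_self _))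
      have hAg : coreA q a b c al be ga (0,1) = {p : ℝ×ℝ | p ∈ unitSquare ∧ al*p.1 + be*p.2 + ga = 0} := by
        ext p
        rw [coreA_mem]
        constructor
        · rintro ⟨h,e⟩; exact ⟨h, by linear_combination e⟩
        · rintro ⟨h,e⟩; exact ⟨h, by linear_combination e⟩
      rw [hAg, (affine_convex al be ga).convexHull_eq] at hzg
      obtain ⟨hzsq, hzline⟩ := hzg
      rw [hA, (affine_convex 0 1 (-z0.2)).convexHull_eq] at hz1
      have hzy : z.2 = z0.2 := by linarith [hz1.2]
      have hzx : z.1 = z0.1 := by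
        have h4 : al*(z.1 - z0.1) = 0 := by linear_combination hzline - hg0 - be*hzy
        have h5 := (mul_eq_zero.1 h4).resolve_left hal
        linarith [sub_eq_zero.1 h5]
      have : z = z0 := Prod.ext hzx hzy
      rw [this]
      exact subset_convexHull ℝ _ ⟨hz0sq, hf0, hg0⟩

private lemma core_caseD (q a b c al be ga : ℝ) (hq : q ≠ 0) (hbe : be ≠ 0) (hal : al ≠ 0)
    (hne : (coreS q a b c al be ga).Nonempty) :
    ∃ T : Finset (ℝ×ℝ), T.card ≤ 3 ∧
      convexHull ℝ (coreS q a b c al be ga) =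
        ⋂ w ∈ T, convexHull ℝ (coreA q a b c al be ga w) := by
  obtain ⟨z0, hz0sq, hf0, hg0⟩ := hne
  have he : -(q*al) ≠ 0 := by simp [hq, hal]
  obtain ⟨x1, hx1def⟩ : ∃ v : ℝ, v = z0.1 := ⟨_, rfl⟩
  obtain ⟨BG, hBGdef⟩ : ∃ v : ℝ, v = a*be - q*ga - b*al := ⟨_, rfl⟩
  obtain ⟨CG, hCGdef⟩ : ∃ v : ℝ, v = c*be - b*ga := ⟨_, rfl⟩
  obtain ⟨x2, hx2def⟩ : ∃ v : ℝ, v = -BG/(-(q*al)) - x1 := ⟨_, rfl⟩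
  obtain ⟨y2, hy2def⟩ : ∃ v : ℝ, v = (-ga - al*x2)/be := ⟨_, rfl⟩
  have hgQ : al*x2 + be*y2 + ga = 0 := by
    rw [hy2def]; field_simp; ring
  have hGx1 : (-(q*al))*x1^2 + BG*x1 + CG = 0 := by
    rw [hBGdef, hCGdef, hx1def]; linear_combination be*hf0 - (q*z0.1+b)*hg0
  have hBGe : BG = -(-(q*al))*(x1+x2) := by
    rw [hx2def]; field_simp; ring
  have hCGe : CG = (-(q*al))*x1*x2 := by
    linear_combination hGx1 - x1*hBGe
  have honL : ∀ z : ℝ×ℝ, al*z.1 + be*z.2 + ga = 0 →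
      be*(q*z.1*z.2 + a*z.1 + b*z.2 + c) = (-(q*al))*(z.1-x1)*(z.1-x2) := by
    intro z hgz
    have hid : be*(q*z.1*z.2 + a*z.1 + b*z.2 + c)
        = ((-(q*al))*z.1^2 + BG*z.1 + CG) + (q*z.1 + b)*(al*z.1 + be*z.2 + ga) := by
      rw [hBGdef, hCGdef]; ring
    rw [hid, hgz, mul_zero, add_zero]
    linear_combination z.1*hBGe + hCGe
  have hfQ : q*x2*y2 + a*x2 + b*y2 + c = 0 := by
    have h := honL (x2, y2) (by simpa using hgQ)
    simp only at h
    have h2 : be*(q*x2*y2 + a*x2 + b*y2 + c) = 0 := by rw [h]; ring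
    exact (mul_eq_zero.1 h2).resolve_left hbe
  by_cases hQ : x2 ∈ Icc (0:ℝ) 1 ∧ y2 ∈ Icc (0:ℝ) 1
  · -- [D1] two-point case: S = {z0, (x2,y2)}
    have hSeq : coreS q a b c al be ga = {z0, ((x2 : ℝ), (y2 : ℝ))} := by
      ext z
      constructor
      · rintro ⟨hzsq, hfz, hgz⟩
        have h := honL z hgz
        rw [hfz, mul_zero] at h
        have hz12 : (z.1-x1)*(z.1-x2) = 0 := by
          have h3 : (-(q*al))*((z.1-x1)*(z.1-x2)) = 0 := by linear_combination -h
          exact (mul_eq_zero.1 h3).resolve_left he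
        rcases mul_eq_zero.1 hz12 with h1 | h1
        · left
          have hzx : z.1 = x1 := by linarith [sub_eq_zero.1 h1]
          have hzy : z.2 = z0.2 := by
            have h4 : be*(z.2 - z0.2) = 0 := by
              rw [hx1def] at hzx
              linear_combination hgz - hg0 - al*hzx
            have h5 := (mul_eq_zero.1 h4).resolve_left hbe
            linarith [sub_eq_zero.1 h5]
          exact Prod.ext (hx1def ▸ hzx) hzy
        · right
          have hzx : z.1 = x2 := by linarith [sub_eq_zero.1 h1]
          have hzy : z.2 = y2 := by
            have h4 : be*(z.2 - y2) = 0 := by linear_combination hgz - hgQ - al*hzx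
            have h5 := (mul_eq_zero.1 h4).resolve_left hbe
            linarith [sub_eq_zero.1 h5]
          exact Prod.ext hzx hzy
      · rintro (rfl | rfl)
        · exact ⟨hz0sq, hf0, hg0⟩
        · exact ⟨⟨hQ.1, hQ.2⟩, hfQ, hgQ⟩
    obtain ⟨c2, hc2def⟩ : ∃ v : ℝ, v = q*al*be := ⟨_, rfl⟩
    obtain ⟨L, hLdef⟩ : ∃ v : ℝ, v = q*(a*be + b*al - q*ga) := ⟨_, rfl⟩
    obtain ⟨K, hKdef⟩ : ∃ v : ℝ, v = q*(a*b - q*c) := ⟨_, rfl⟩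
    have hc2ne : c2 ≠ 0 := by
      rw [hc2def]; exact mul_ne_zero (mul_ne_zero hq hal) hbe
    have hpack : ∃ dir s : ℝ, (dir = 1 ∨ dir = -1) ∧ (1+|q| ≤ b + s*be) ∧
        (0 ≤ dir*(c2*s^2+L*s+K)) ∧ 0 < dir*c2 := by
      by_cases hsgn : 0 < c2
      · obtain ⟨s, h1, h2⟩ := exists_quad_signed c2 L K be (1+|q|-b) hsgn hbe
        exact ⟨1, s, Or.inl rfl, by linarith, by linarith, by linarith⟩
      · have hsgn' : c2 < 0 := by
          rcases lt_trichotomy c2 0 with h|h|h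
          · exact h
          · exact absurd h hc2ne
          · exact absurd h hsgn
        obtain ⟨s, h1, h2⟩ := exists_quad_signed (-c2) (-L) (-K) be (1+|q|-b) (by linarith) hbe
        exact ⟨-1, s, Or.inr rfl, by linarith, by nlinarith, by nlinarith⟩
    obtain ⟨dir, s, hdir, hsw, hsD, hdc2⟩ := hpack
    obtain ⟨C1, hC1conv, hC1sub, hC1ex⟩ := member_x q a b c al be ga 1 s dir (Or.inl rfl) hdir
      (by nlinarith [hsw]) (by
        have e2 : q*((a+s*al)*(b+s*be) - q*(c+s*ga)) = c2*s^2 + L*s + K := by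
          rw [hc2def, hLdef, hKdef]; ring
        rw [e2]
        nlinarith [hsD])
    refine ⟨{((0:ℝ),(1:ℝ)), ((1:ℝ), 1*s)}, card2 _ _, ?_⟩
    apply Set.Subset.antisymm
    · apply Set.subset_iInter₂
      intro w _
      exact convexHull_mono (coreS_subset_coreA _ _ _ _ _ _ _ w)
    · intro z hz
      rw [Set.mem_iInter₂] at hz
      have hzg := hz (0,1) (Finset.mem_insert_self _ _)
      have hz1 := hz (1, 1*s) (Finset.mem_insert_of_mem (Finset.mem_singleton_self _))
      have hAg : coreA q a b c al be ga (0,1) = {p : ℝ×ℝ | p ∈ unitSquare ∧ al*p.1 + be*p.2 + ga = 0} := by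
        ext p
        rw [coreA_mem]
        constructor
        · rintro ⟨h,e⟩; exact ⟨h, by linear_combination e⟩
        · rintro ⟨h,e⟩; exact ⟨h, by linear_combination e⟩
      rw [hAg, (affine_convex al be ga).convexHull_eq] at hzg
      obtain ⟨hzsq, hzline⟩ := hzg
      have hex := hC1ex z (convexHull_min hC1sub hC1conv hz1) hzline
      have honLz := honL z hzline
      have hprod : (z.1-x1)*(z.1-x2) ≤ 0 := by
        have h1 : 0 ≤ dir*(be^2*(q*z.1*z.2 + a*z.1 + b*z.2 + c)) := by nlinarith [hex]
        have h2 : be^2*(q*z.1*z.2 + a*z.1 + b*z.2 + c) = (-c2)*((z.1-x1)*(z.1-x2)) := by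
          rw [hc2def]
          linear_combination be*honLz
        rw [h2] at h1
        nlinarith [h1, hdc2]
      rw [hSeq, convexHull_pair]
      by_cases hx12 : x1 = x2
      · have hzx : z.1 = x1 := by
          rw [← hx12] at hprod
          nlinarith [hprod, sq_nonneg (z.1 - x1)]
        have hz0eq : z = z0 := by
          refine Prod.ext (hx1def ▸ hzx) ?_
          have h4 : be*(z.2 - z0.2) = 0 := by
            rw [hx1def] at hzx
            linear_combination hzline - hg0 - al*hzx
          have h5 := (mul_eq_zero.1 h4).resolve_left hbe
          linarith [sub_eq_zero.1 h5]
        rw [hz0eq]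
        exact left_mem_segment ℝ _ _
      · have hd2 : (x2 - x1) ≠ 0 := fun h => hx12 (by linarith [sub_eq_zero.1 h])
        have e1 : (x2 - z.1)/(x2 - x1) * (x2 - x1) = x2 - z.1 := div_mul_cancel₀ _ hd2
        have e2 : (z.1 - x1)/(x2 - x1) * (x2 - x1) = z.1 - x1 := div_mul_cancel₀ _ hd2
        refine ⟨(x2 - z.1)/(x2 - x1), (z.1 - x1)/(x2 - x1), ?_, ?_, ?_, ?_⟩
        · rw [div_nonneg_iff]
          rcases lt_or_gt_of_ne hd2 with h | h
          · right; constructor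
            · nlinarith [hprod]
            · linarith
          · left; constructor
            · nlinarith [hprod]
            · linarith
        · rw [div_nonneg_iff]
          rcases lt_or_gt_of_ne hd2 with h | h
          · right; constructor
            · nlinarith [hprod]
            · linarith
          · left; constructor
            · nlinarith [hprod]
            · linarith
        · rw [← add_div, show x2 - z.1 + (z.1 - x1) = x2 - x1 by ring, div_self hd2]
        · have eb0 : be*z0.2 = -ga - al*x1 := by rw [hx1def]; linarith [hg0]
          have ebQ : be*y2 = -ga - al*x2 := by linarith [hgQ]
          have ebz : be*z.2 = -ga - al*z.1 := by linarith [hzline]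
          apply Prod.ext
          · simp only [Prod.fst_add, Prod.smul_fst, smul_eq_mul]
            have goal1 : (x2 - z.1)/(x2 - x1)*x1 + (z.1 - x1)/(x2 - x1)*x2 = z.1 := by
              rw [div_mul_eq_mul_div, div_mul_eq_mul_div, ← add_div]
              rw [show (x2 - z.1)*x1 + (z.1 - x1)*x2 = z.1*(x2 - x1) by ring]
              exact mul_div_cancel_right₀ _ hd2
            rw [← hx1def]
            exact goal1
          · simp only [Prod.snd_add, Prod.smul_snd, smul_eq_mul]
            have hbd : be*(x2 - x1) ≠ 0 := mul_ne_zero hbe hd2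
            have key : (be*(x2-x1)) * ((x2 - z.1)/(x2 - x1)*z0.2 + (z.1 - x1)/(x2 - x1)*y2)
                = (be*(x2-x1)) * z.2 := by
              linear_combination (be*z0.2)*e1 + (be*y2)*e2 + (x2 - z.1)*eb0 + (z.1 - x1)*ebQ - (x2 - x1)*ebz
            exact mul_left_cancel₀ hbd key
  · -- [D2] single point case with cross member
    exact core_caseD2 q a b c al be ga x2 y2 z0 hq hbe hal hz0sq hf0 hg0 hgQ hfQ hQ

lemma core (q a b c al be ga : ℝ) (hq : q ≠ 0) (hg : ¬(al = 0 ∧ be = 0 ∧ ga = 0))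
    (hne : (coreS q a b c al be ga).Nonempty) :
    ∃ T : Finset (ℝ×ℝ), T.card ≤ 3 ∧
      convexHull ℝ (coreS q a b c al be ga) =
        ⋂ w ∈ T, convexHull ℝ (coreA q a b c al be ga w) := by
  by_cases hbe : be = 0
  · by_cases hal : al = 0
    · exfalso
      obtain ⟨z0, _, _, hg0⟩ := hne
      rw [hal, hbe] at hg0
      exact hg ⟨hal, hbe, by linarith⟩
    · exact core_caseV q a b c al be ga hq hbe hal hne
  · by_cases hal : al = 0
    · exact core_caseH q a b c al be ga hq hbe hal hne
    · exact core_caseD q a b c al be ga hq hbe hal hne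

lemma iInter_image_eq (φ : ℝ×ℝ → ℝ×ℝ) (T : Finset (ℝ×ℝ)) (F G : (ℝ×ℝ) → Set (ℝ×ℝ))
    (h : ∀ w ∈ T, F (φ w) = G w) :
    ⋂ l ∈ T.image φ, F l = ⋂ w ∈ T, G w := by
  ext z
  simp only [Set.mem_iInter, Finset.mem_image]
  constructor
  · intro hz w hw
    rw [← h w hw]
    exact hz (φ w) ⟨w, hw, rfl⟩
  · rintro hz l ⟨w, hw, rfl⟩
    rw [h w hw]
    exact hz w hw

lemma setS_mem (q1 q2 a1 a2 b1 b2 c1 c2 : ℝ) (p : ℝ×ℝ) :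
    p ∈ setS q1 q2 a1 a2 b1 b2 c1 c2 ↔ p ∈ unitSquare ∧
      (q1 * p.1 * p.2 + a1 * p.1 + b1 * p.2 + c1 = 0 ∧
       q2 * p.1 * p.2 + a2 * p.1 + b2 * p.2 + c2 = 0) := Iff.rfl

lemma setAgg_mem (q1 q2 a1 a2 b1 b2 c1 c2 : ℝ) (l : ℝ×ℝ) (p : ℝ×ℝ) :
    p ∈ setAgg q1 q2 a1 a2 b1 b2 c1 c2 l ↔ p ∈ unitSquare ∧
      (l.1 * (q1 * p.1 * p.2 + a1 * p.1 + b1 * p.2 + c1) +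
       l.2 * (q2 * p.1 * p.2 + a2 * p.1 + b2 * p.2 + c2) = 0) := Iff.rfl

lemma setAgg_mem' (q1 q2 a1 a2 b1 b2 c1 c2 l1 l2 : ℝ) (p : ℝ×ℝ) :
    p ∈ setAgg q1 q2 a1 a2 b1 b2 c1 c2 (l1, l2) ↔ p ∈ unitSquare ∧
      (l1 * (q1 * p.1 * p.2 + a1 * p.1 + b1 * p.2 + c1) +
       l2 * (q2 * p.1 * p.2 + a2 * p.1 + b2 * p.2 + c2) = 0) := Iff.rfl

theorem stmt0 (q1 q2 a1 a2 b1 b2 c1 c2 : ℝ)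
    (hne : (setS q1 q2 a1 a2 b1 b2 c1 c2).Nonempty)
    (hind : ¬ ∃ μ : ℝ, (q1, a1, b1, c1) = (μ * q2, μ * a2, μ * b2, μ * c2)) :
    ∃ T : Finset (ℝ × ℝ), T.card ≤ 3 ∧
      convexHull ℝ (setS q1 q2 a1 a2 b1 b2 c1 c2) =
        ⋂ l ∈ T, convexHull ℝ (setAgg q1 q2 a1 a2 b1 b2 c1 c2 l) := by
  by_cases hq1 : q1 = 0
  · by_cases hq2 : q2 = 0
    · -- both affine: T = {(1,0),(0,1)}
      subst hq1; subst hq2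
      refine ⟨{((1:ℝ),(0:ℝ)), ((0:ℝ),(1:ℝ))}, card2 _ _, ?_⟩
      have hSconv : Convex ℝ (setS 0 0 a1 a2 b1 b2 c1 c2) := by
        intro p hp q hq t s ht hs hts
        rw [setS_mem] at hp hq ⊢
        have h1 := (affine_convex a1 b1 c1) ⟨hp.1, by linarith [hp.2.1]⟩ ⟨hq.1, by linarith [hq.2.1]⟩ ht hs hts
        have h2 := (affine_convex a2 b2 c2) ⟨hp.1, by linarith [hp.2.2]⟩ ⟨hq.1, by linarith [hq.2.2]⟩ ht hs hts
        exact ⟨h1.1, by linarith [h1.2], by linarith [h2.2]⟩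
      have hA1 : setAgg 0 0 a1 a2 b1 b2 c1 c2 (1,0) = {p : ℝ×ℝ | p ∈ unitSquare ∧ a1*p.1 + b1*p.2 + c1 = 0} := by
        ext p; rw [setAgg_mem']; constructor
        · rintro ⟨h, e⟩; exact ⟨h, by linear_combination e⟩
        · rintro ⟨h, e⟩; exact ⟨h, by linear_combination e⟩
      have hA2 : setAgg 0 0 a1 a2 b1 b2 c1 c2 (0,1) = {p : ℝ×ℝ | p ∈ unitSquare ∧ a2*p.1 + b2*p.2 + c2 = 0} := by
        ext p; rw [setAgg_mem']; constructor
        · rintro ⟨h, e⟩; exact ⟨h, by linear_combination e⟩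
        · rintro ⟨h, e⟩; exact ⟨h, by linear_combination e⟩
      rw [hSconv.convexHull_eq]
      have e1 : convexHull ℝ (setAgg 0 0 a1 a2 b1 b2 c1 c2 (1,0)) = setAgg 0 0 a1 a2 b1 b2 c1 c2 (1,0) := by
        rw [hA1]; exact (affine_convex a1 b1 c1).convexHull_eq
      have e2 : convexHull ℝ (setAgg 0 0 a1 a2 b1 b2 c1 c2 (0,1)) = setAgg 0 0 a1 a2 b1 b2 c1 c2 (0,1) := by
        rw [hA2]; exact (affine_convex a2 b2 c2).convexHull_eq
      ext z
      simp only [Set.mem_iInter, Finset.mem_insert, Finset.mem_singleton]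
      constructor
      · intro hz l hl
        rcases hl with h | h
        · subst h; rw [e1, hA1]; rw [setS_mem] at hz; exact ⟨hz.1, by linarith [hz.2.1]⟩
        · subst h; rw [e2, hA2]; rw [setS_mem] at hz; exact ⟨hz.1, by linarith [hz.2.2]⟩
      · intro hz
        have h1 := hz (1,0) (Or.inl rfl); rw [e1, hA1] at h1
        have h2 := hz (0,1) (Or.inr rfl); rw [e2, hA2] at h2
        rw [setS_mem]
        exact ⟨h1.1, by linarith [h1.2], by linarith [h2.2]⟩
    · -- q1 = 0, q2 ≠ 0 : use core with f := f2, g := q2·f1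
      subst hq1
      have hf1 : ¬(a1 = 0 ∧ b1 = 0 ∧ c1 = 0) := by
        rintro ⟨ha, hb, hc⟩
        exact hind ⟨0, by simp [ha, hb, hc]⟩
      have hgz : ¬(q2*a1 = 0 ∧ q2*b1 = 0 ∧ q2*c1 = 0) := by
        rintro ⟨ha, hb, hc⟩
        exact hf1 ⟨by rcases mul_eq_zero.1 ha with h|h; exact absurd h hq2; exact h,
                   by rcases mul_eq_zero.1 hb with h|h; exact absurd h hq2; exact h,
                   by rcases mul_eq_zero.1 hc with h|h; exact absurd h hq2; exact h⟩
      have hSeq : setS 0 q2 a1 a2 b1 b2 c1 c2 = coreS q2 a2 b2 c2 (q2*a1) (q2*b1) (q2*c1) := by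
        ext p
        rw [setS_mem]
        constructor
        · rintro ⟨h, e1, e2⟩
          exact ⟨h, by linarith [e2], by linear_combination q2 * e1⟩
        · rintro ⟨h, e2, e1⟩
          refine ⟨h, ?_, by linarith [e2]⟩
          have : q2 * (0 * p.1 * p.2 + a1 * p.1 + b1 * p.2 + c1) = 0 := by linear_combination e1
          rcases mul_eq_zero.1 this with h'|h'
          · exact absurd h' hq2
          · exact h'
      obtain ⟨T, hT, hEq⟩ := core q2 a2 b2 c2 (q2*a1) (q2*b1) (q2*c1) hq2 hgz (by rw [← hSeq]; exact hne)
      refine ⟨T.image (fun w => (w.2*q2, w.1)), le_trans (Finset.card_image_le) hT, ?_⟩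
      rw [hSeq, hEq]
      refine (iInter_image_eq _ _ _ _ ?_).symm
      intro w _
      congr 1
      ext p
      rw [setAgg_mem]
      constructor
      · rintro ⟨h, e⟩; exact ⟨h, by linear_combination e⟩
      · rintro ⟨h, e⟩; exact ⟨h, by linear_combination e⟩
  · -- q1 ≠ 0
    set al := q1*a2 - q2*a1 with hal
    set be := q1*b2 - q2*b1 with hbe
    set ga := q1*c2 - q2*c1 with hga
    by_cases hgz : al = 0 ∧ be = 0 ∧ ga = 0
    · -- pencil degenerate
      by_cases hq2 : q2 = 0
      · -- then f2 ≡ 0 : T = {(1,0)}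
        have ha2 : a2 = 0 := by
          have h0 := hgz.1; rw [hal, hq2] at h0
          have h1 : q1 * a2 = 0 := by linarith
          exact (mul_eq_zero.1 h1).resolve_left hq1
        have hb2 : b2 = 0 := by
          have h0 := hgz.2.1; rw [hbe, hq2] at h0
          have h1 : q1 * b2 = 0 := by linarith
          exact (mul_eq_zero.1 h1).resolve_left hq1
        have hc2 : c2 = 0 := by
          have h0 := hgz.2.2; rw [hga, hq2] at h0
          have h1 : q1 * c2 = 0 := by linarith
          exact (mul_eq_zero.1 h1).resolve_left hq1
        subst hq2; subst ha2; subst hb2; subst hc2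
        refine ⟨{((1:ℝ),(0:ℝ))}, by simp, ?_⟩
        have : setS q1 0 a1 0 b1 0 c1 0 = setAgg q1 0 a1 0 b1 0 c1 0 (1,0) := by
          ext p; rw [setS_mem, setAgg_mem']
          constructor
          · rintro ⟨h, e1, _⟩; exact ⟨h, by linear_combination e1⟩
          · rintro ⟨h, e⟩; exact ⟨h, by linear_combination e, by ring⟩
        rw [this]
        simp
      · -- contradiction with hind
        exfalso
        apply hind
        refine ⟨q1/q2, ?_⟩
        have h1 : q1 = q1/q2*q2 := by field_simp
        have h2 : a1 = q1/q2*a2 := by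
          have := hgz.1; rw [hal] at this; field_simp; nlinarith [this]
        have h3 : b1 = q1/q2*b2 := by
          have := hgz.2.1; rw [hbe] at this; field_simp; nlinarith [this]
        have h4 : c1 = q1/q2*c2 := by
          have := hgz.2.2; rw [hga] at this; field_simp; nlinarith [this]
        rw [Prod.ext_iff, Prod.ext_iff, Prod.ext_iff]
        exact ⟨h1, h2, h3, h4⟩
    · -- main: core with f := f1, g := q1 f2 − q2 f1
      have hSeq : setS q1 q2 a1 a2 b1 b2 c1 c2 = coreS q1 a1 b1 c1 al be ga := by
        ext p
        rw [setS_mem]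
        constructor
        · rintro ⟨h, e1, e2⟩
          exact ⟨h, e1, by rw [hal, hbe, hga]; linear_combination q1*e2 - q2*e1⟩
        · rintro ⟨h, e1, eg⟩
          refine ⟨h, e1, ?_⟩
          rw [hal, hbe, hga] at eg
          have : q1 * (q2 * p.1 * p.2 + a2 * p.1 + b2 * p.2 + c2) = 0 := by
            linear_combination eg + q2 * e1
          rcases mul_eq_zero.1 this with h'|h'
          · exact absurd h' hq1
          · exact h'
      obtain ⟨T, hT, hEq⟩ := core q1 a1 b1 c1 al be ga hq1 hgz (by rw [← hSeq]; exact hne)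
      refine ⟨T.image (fun w => (w.1 - w.2*q2, w.2*q1)), le_trans (Finset.card_image_le) hT, ?_⟩
      rw [hSeq, hEq]
      refine (iInter_image_eq _ _ _ _ ?_).symm
      intro w _
      congr 1
      ext p
      rw [setAgg_mem]
      constructor
      · rintro ⟨h, e⟩
        refine ⟨h, ?_⟩
        rw [hal, hbe, hga]
        · linear_combination e
      · rintro ⟨h, e⟩
        refine ⟨h, ?_⟩
        rw [hal, hbe, hga] at e
        linear_combination e
end

section
/- The convex hull of the set {(x, y1, y2) ∈ [0,1]³ : x·y1 = 1/2} equals {(x, y1, y2) ∈ [0,1]³ : x·y1 ≥ 1/2 and x + y1 ≤ 3/2}. -/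
open Set

/-- The box `[0,1]³`. -/
def unitCube : Set (ℝ × ℝ × ℝ) :=
  {p | p.1 ∈ Icc (0:ℝ) 1 ∧ p.2.1 ∈ Icc (0:ℝ) 1 ∧ p.2.2 ∈ Icc (0:ℝ) 1}

lemma stmt10_aux_prod (x1 y1 x2 y2 a b : ℝ) (h1 : x1*y1 ≥ 1/2) (h2 : x2*y2 ≥ 1/2)
    (hx1l : 0 ≤ x1) (hy1l : 0 ≤ y1) (hx2l : 0 ≤ x2) (hy2l : 0 ≤ y2)
    (ha : 0 ≤ a) (hb : 0 ≤ b) (hab : a + b = 1) :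
    (a * x1 + b * x2) * (a * y1 + b * y2) ≥ 1/2 := by
  have hs0 : 0 ≤ x1*y2 + x2*y1 := by positivity
  have hP : 1/4 ≤ (x1*y1)*(x2*y2) := by
    nlinarith [mul_nonneg (by linarith : (0:ℝ) ≤ x1*y1 - 1/2)
      (by linarith : (0:ℝ) ≤ x2*y2 - 1/2)]
  have hs2 : 1 ≤ (x1*y2 + x2*y1)^2 := by nlinarith [sq_nonneg (x1*y2 - x2*y1)]
  have hab2 : 1 ≤ x1*y2 + x2*y1 := by nlinarith [hs0, hs2]
  nlinarith [mul_nonneg (mul_nonneg ha ha) (by linarith : (0:ℝ) ≤ x1*y1 - 1/2),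
    mul_nonneg (mul_nonneg hb hb) (by linarith : (0:ℝ) ≤ x2*y2 - 1/2),
    mul_nonneg (mul_nonneg ha hb) (by linarith : (0:ℝ) ≤ x1*y2 + x2*y1 - 1)]

lemma stmt10_sub1 :
    convexHull ℝ {p ∈ unitCube | p.1 * p.2.1 = 1/2} ⊆
      {p ∈ unitCube | p.1 * p.2.1 ≥ 1/2 ∧ p.1 + p.2.1 ≤ 3/2} := by
  apply convexHull_min
  · rintro ⟨x, y, z⟩ ⟨⟨hx, hy, hz⟩, he⟩
    simp only [unitCube, mem_Icc, mem_setOf_eq] at *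
    obtain ⟨hx0, hx1⟩ := hx
    obtain ⟨hy0, hy1⟩ := hy
    exact ⟨⟨⟨hx0, hx1⟩, ⟨hy0, hy1⟩, hz⟩, he.ge, by nlinarith⟩
  · rintro ⟨x1, y1, z1⟩ ⟨⟨hx1, hy1, hz1⟩, h1, s1⟩ ⟨x2, y2, z2⟩
      ⟨⟨hx2, hy2, hz2⟩, h2, s2⟩ a b ha hb hab
    simp only [unitCube, mem_Icc, mem_setOf_eq, Prod.smul_mk, Prod.mk_add_mk,
      smul_eq_mul] at *
    obtain ⟨hx1l, hx1r⟩ := hx1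
    obtain ⟨hy1l, hy1r⟩ := hy1
    obtain ⟨hz1l, hz1r⟩ := hz1
    obtain ⟨hx2l, hx2r⟩ := hx2
    obtain ⟨hy2l, hy2r⟩ := hy2
    obtain ⟨hz2l, hz2r⟩ := hz2
    have hprod := stmt10_aux_prod x1 y1 x2 y2 a b h1 h2 hx1l hy1l hx2l hy2l ha hb hab
    refine ⟨⟨⟨?_, ?_⟩, ⟨?_, ?_⟩, ⟨?_, ?_⟩⟩, hprod, ?_⟩ <;>
      linarith [mul_nonneg ha hx1l, mul_nonneg hb hx2l, mul_nonneg ha hy1l,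
        mul_nonneg hb hy2l, mul_nonneg ha hz1l, mul_nonneg hb hz2l,
        mul_nonneg ha (by linarith : (0:ℝ) ≤ 1 - x1),
        mul_nonneg hb (by linarith : (0:ℝ) ≤ 1 - x2),
        mul_nonneg ha (by linarith : (0:ℝ) ≤ 1 - y1),
        mul_nonneg hb (by linarith : (0:ℝ) ≤ 1 - y2),
        mul_nonneg ha (by linarith : (0:ℝ) ≤ 1 - z1),
        mul_nonneg hb (by linarith : (0:ℝ) ≤ 1 - z2),
        mul_nonneg ha (by linarith : (0:ℝ) ≤ 3/2 - (x1 + y1)),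
        mul_nonneg hb (by linarith : (0:ℝ) ≤ 3/2 - (x2 + y2))]

lemma stmt10_sub2 :
    {p ∈ unitCube | p.1 * p.2.1 ≥ 1/2 ∧ p.1 + p.2.1 ≤ 3/2} ⊆
      convexHull ℝ {p ∈ unitCube | p.1 * p.2.1 = 1/2} := by
  rintro ⟨x, y, z⟩ ⟨⟨hx, hy, hz⟩, hxy, hsum⟩
  simp only [unitCube, mem_Icc, mem_setOf_eq] at hx hy hz hxy hsum
  obtain ⟨hx0, hx1⟩ := hx
  obtain ⟨hy0, hy1⟩ := hy
  have hxp : (1:ℝ)/2 ≤ x := by nlinarith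
  have hyp : (1:ℝ)/2 ≤ y := by nlinarith
  have hxpos : (0:ℝ) < x := by linarith
  have hxne : x ≠ 0 := ne_of_gt hxpos
  have hA : ((x, 1/(2*x), z) : ℝ × ℝ × ℝ) ∈
      {p : ℝ × ℝ × ℝ | p ∈ unitCube ∧ p.1 * p.2.1 = 1/2} := by
    simp only [unitCube, mem_Icc, mem_setOf_eq]
    refine ⟨⟨⟨by linarith, hx1⟩, ⟨?_, ?_⟩, hz⟩, by field_simp⟩
    · rw [le_div_iff₀ (by linarith)]; nlinarith
    · rw [div_le_one (by linarith)]; linarith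
  have hC : (((1:ℝ)/2, (1:ℝ), z) : ℝ × ℝ × ℝ) ∈
      {p : ℝ × ℝ × ℝ | p ∈ unitCube ∧ p.1 * p.2.1 = 1/2} := by
    simp only [unitCube, mem_Icc, mem_setOf_eq]
    exact ⟨⟨⟨by norm_num, by norm_num⟩, ⟨by norm_num, le_refl 1⟩, hz⟩, by norm_num⟩
  have hD : (((1:ℝ), (1:ℝ)/2, z) : ℝ × ℝ × ℝ) ∈
      {p : ℝ × ℝ × ℝ | p ∈ unitCube ∧ p.1 * p.2.1 = 1/2} := by
    simp only [unitCube, mem_Icc, mem_setOf_eq]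
    exact ⟨⟨⟨by norm_num, le_refl 1⟩, ⟨by norm_num, by norm_num⟩, hz⟩, by norm_num⟩
  have hAhull := subset_convexHull ℝ _ hA
  have hChull := subset_convexHull ℝ _ hC
  have hDhull := subset_convexHull ℝ _ hD
  by_cases hdeg : x * y = 1/2
  · apply subset_convexHull ℝ _
    simp only [unitCube, mem_Icc, mem_setOf_eq]
    exact ⟨⟨⟨hx0, hx1⟩, ⟨hy0, hy1⟩, hz⟩, hdeg⟩
  · have hxy' : 1/2 < x * y := lt_of_le_of_ne hxy (Ne.symm hdeg)
    have hylb : 1/(2*x) < y := by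
      rw [div_lt_iff₀ (by linarith)]; nlinarith
    have hd : 0 < (3/2 - x) - 1/(2*x) := by
      calc (0:ℝ) < y - 1/(2*x) := by linarith
      _ ≤ (3/2 - x) - 1/(2*x) := by linarith
    have hdne : ((3/2 - x) - 1/(2*x)) ≠ 0 := ne_of_gt hd
    have hB : ((x, 3/2 - x, z) : ℝ × ℝ × ℝ) ∈ convexHull ℝ
        {p : ℝ × ℝ × ℝ | p ∈ unitCube ∧ p.1 * p.2.1 = 1/2} := by
      apply (convex_convexHull ℝ _).segment_subset hChull hDhull
      refine ⟨2 - 2*x, 2*x - 1, by linarith, by linarith, by ring, ?_⟩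
      simp only [Prod.smul_mk, smul_eq_mul, Prod.mk_add_mk, Prod.mk.injEq]
      refine ⟨by ring, by ring, by ring⟩
    apply (convex_convexHull ℝ _).segment_subset hAhull hB
    have he0 : (0:ℝ) < (3 - 2*x)*x - 1 := by
      nlinarith [mul_nonneg hxpos.le (by linarith : (0:ℝ) ≤ 3 - 2*x - 2*y)]
    have hene : ((3 - 2*x)*x - 1) ≠ 0 := ne_of_gt he0
    refine ⟨x*(3 - 2*x - 2*y)/((3 - 2*x)*x - 1), (2*x*y - 1)/((3 - 2*x)*x - 1),
      ?_, ?_, ?_, ?_⟩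
    · exact div_nonneg (mul_nonneg hxpos.le (by linarith)) he0.le
    · exact div_nonneg (by linarith) he0.le
    · field_simp [show x * (3 - x * 2) - 1 ≠ 0 by intro h; apply hene; linarith]
      ring
    · simp only [Prod.smul_mk, smul_eq_mul, Prod.mk_add_mk, Prod.mk.injEq]
      refine ⟨?_, ?_, ?_⟩
      · field_simp [show x * (3 - x * 2) - 1 ≠ 0 by intro h; apply hene; linarith]
        ring
      · field_simp [show x * (3 - x * 2) - 1 ≠ 0 by intro h; apply hene; linarith]
        ring
      · field_simp [show x * (3 - x * 2) - 1 ≠ 0 by intro h; apply hene; linarith]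
        ring

theorem stmt10 :
    convexHull ℝ {p ∈ unitCube | p.1 * p.2.1 = 1/2} =
      {p ∈ unitCube | p.1 * p.2.1 ≥ 1/2 ∧ p.1 + p.2.1 ≤ 3/2} := by
  exact Subset.antisymm stmt10_sub1 stmt10_sub2
end

section
/- Let r, τ, m, b ∈ ℝ with τ ≠ 0, and define S₁ = {(x, y) ∈ [0,1]² : (x − r)·y = τ}, S₂ = {(x, y) ∈ [0,1]² : m·x − y + b = 0}, and S = S₁ ∩ S₂. If S contains exactly two points, then conv(S) = conv(S₁) ∩ S₂, i.e., the convex hull of S is the line segment joining the two points of S and equals the intersection of the convex hull of S₁ with the line segment S₂. -/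
open Set

/-- `S₁ = {(x,y) ∈ [0,1]² : (x − r)·y = τ}`. -/
def setS1 (r τ : ℝ) : Set (ℝ × ℝ) := {p ∈ unitSquare | (p.1 - r) * p.2 = τ}

/-- `S₂ = {(x,y) ∈ [0,1]² : m·x − y + b = 0}`. -/
def setS2 (m b : ℝ) : Set (ℝ × ℝ) := {p ∈ unitSquare | m * p.1 - p.2 + b = 0}

lemma convex_S2 (m b : ℝ) : Convex ℝ (setS2 m b) := by
  intro x hx y hy a c ha hc hac
  obtain ⟨⟨⟨hx1,hx2⟩,hx3,hx4⟩,hx5⟩ := hx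
  obtain ⟨⟨⟨hy1,hy2⟩,hy3,hy4⟩,hy5⟩ := hy
  refine ⟨⟨⟨?_,?_⟩,?_,?_⟩,?_⟩ <;>
    simp only [Prod.fst_add, Prod.snd_add, Prod.smul_fst, Prod.smul_snd, smul_eq_mul]
  · nlinarith
  · nlinarith
  · nlinarith
  · nlinarith
  · linear_combination a*hx5 + c*hy5 - b*hac

lemma convex_Cpos (r τ : ℝ) (hτ : 0 < τ) :
    Convex ℝ {z : ℝ × ℝ | 0 ≤ z.2 ∧ τ ≤ (z.1 - r) * z.2} := by
  intro x hx y hy a c ha hc hac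
  obtain ⟨hx1, hx2⟩ := hx
  obtain ⟨hy1, hy2⟩ := hy
  have hxpos : 0 < x.2 := by
    rcases hx1.lt_or_eq with h|h
    · exact h
    · exfalso; rw [← h, mul_zero] at hx2; linarith
  have hypos : 0 < y.2 := by
    rcases hy1.lt_or_eq with h|h
    · exact h
    · exfalso; rw [← h, mul_zero] at hy2; linarith
  have hxr : 0 < x.1 - r := by
    by_contra h; push_neg at h
    nlinarith [mul_nonneg (neg_nonneg.mpr h) hx1]
  have hyr : 0 < y.1 - r := by
    by_contra h; push_neg at h
    nlinarith [mul_nonneg (neg_nonneg.mpr h) hy1]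
  have hprod : τ*τ ≤ ((x.1-r)*x.2)*((y.1-r)*y.2) :=
    mul_le_mul hx2 hy2 hτ.le (by positivity)
  have hcross : 2*τ ≤ (x.1-r)*y.2 + (y.1-r)*x.2 := by
    nlinarith [sq_nonneg ((x.1-r)*y.2 - (y.1-r)*x.2), mul_pos hxr hypos, mul_pos hyr hxpos]
  have htau : τ*((a+c)*(a+c)) = τ := by rw [hac]; ring
  constructor
  · simp only [Prod.snd_add, Prod.smul_snd, smul_eq_mul]; positivity
  · simp only [Prod.fst_add, Prod.snd_add, Prod.smul_fst, Prod.smul_snd, smul_eq_mul]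
    have h2 : a*x.1 + c*y.1 - r = a*(x.1-r) + c*(y.1-r) := by linear_combination r*hac
    rw [h2]
    nlinarith [mul_nonneg (mul_nonneg ha ha) (sub_nonneg.2 hx2),
      mul_nonneg (mul_nonneg hc hc) (sub_nonneg.2 hy2),
      mul_nonneg (mul_nonneg ha hc) (sub_nonneg.2 hcross)]

lemma convex_Cneg (r τ : ℝ) (hτ : τ < 0) :
    Convex ℝ {z : ℝ × ℝ | 0 ≤ z.2 ∧ (z.1 - r) * z.2 ≤ τ} := by
  intro x hx y hy a c ha hc hac
  obtain ⟨hx1, hx2⟩ := hx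
  obtain ⟨hy1, hy2⟩ := hy
  have hxpos : 0 < x.2 := by
    rcases hx1.lt_or_eq with h|h
    · exact h
    · exfalso; rw [← h, mul_zero] at hx2; linarith
  have hypos : 0 < y.2 := by
    rcases hy1.lt_or_eq with h|h
    · exact h
    · exfalso; rw [← h, mul_zero] at hy2; linarith
  have hxr : x.1 - r < 0 := by
    by_contra h; push_neg at h
    nlinarith [mul_nonneg h hx1]
  have hyr : y.1 - r < 0 := by
    by_contra h; push_neg at h
    nlinarith [mul_nonneg h hy1]
  have hprod : τ*τ ≤ ((r-x.1)*x.2)*((r-y.1)*y.2) := by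
    nlinarith [mul_le_mul (by linarith : -τ ≤ (r-x.1)*x.2) (by linarith : -τ ≤ (r-y.1)*y.2)
      (by linarith : (0:ℝ) ≤ -τ) (by nlinarith : (0:ℝ) ≤ (r-x.1)*x.2)]
  have hcross : (x.1-r)*y.2 + (y.1-r)*x.2 ≤ 2*τ := by
    nlinarith [sq_nonneg ((r-x.1)*y.2 - (r-y.1)*x.2), mul_pos (neg_pos.mpr hxr) hypos,
      mul_pos (neg_pos.mpr hyr) hxpos]
  constructor
  · simp only [Prod.snd_add, Prod.smul_snd, smul_eq_mul]; positivity
  · simp only [Prod.fst_add, Prod.snd_add, Prod.smul_fst, Prod.smul_snd, smul_eq_mul]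
    have h2 : a*x.1 + c*y.1 - r = a*(x.1-r) + c*(y.1-r) := by linear_combination r*hac
    have htau : τ*((a+c)*(a+c)) = τ := by rw [hac]; ring
    rw [h2]
    nlinarith [mul_nonneg (mul_nonneg ha ha) (by linarith : (0:ℝ) ≤ τ - (x.1-r)*x.2),
      mul_nonneg (mul_nonneg hc hc) (by linarith : (0:ℝ) ≤ τ - (y.1-r)*y.2),
      mul_nonneg (mul_nonneg ha hc) (by linarith : (0:ℝ) ≤ 2*τ - ((x.1-r)*y.2 + (y.1-r)*x.2))]
lemma mem_seg (m b : ℝ) (p q z : ℝ × ℝ) (hne : p.1 ≠ q.1)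
    (hp2 : p.2 = m*p.1 + b) (hq2 : q.2 = m*q.1 + b) (hzl : z.2 = m*z.1 + b)
    (hzz : (z.1 - p.1)*(z.1 - q.1) ≤ 0) : z ∈ segment ℝ p q := by
  have hd : q.1 - p.1 ≠ 0 := sub_ne_zero.mpr (Ne.symm hne)
  set t : ℝ := (z.1 - p.1)/(q.1 - p.1) with hT
  have htd : t*(q.1 - p.1) = z.1 - p.1 := div_mul_cancel₀ _ hd
  have ht : 0 ≤ t*(1-t) := by
    have h : t*(1-t)*(q.1-p.1)^2 = (z.1-p.1)*(q.1-z.1) := by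
      linear_combination ((q.1-p.1) - t*(q.1-p.1) - (z.1-p.1))*htd
    have hd2 : (0:ℝ) < (q.1-p.1)^2 := by positivity
    exact (mul_nonneg_iff_of_pos_right hd2).mp (by rw [h]; nlinarith [hzz])
  have ht0 : 0 ≤ t := by by_contra h; push_neg at h; nlinarith
  have ht1 : t ≤ 1 := by by_contra h; push_neg at h; nlinarith
  refine ⟨1-t, t, by linarith, ht0, by ring, ?_⟩
  have hfst : (1-t)*p.1 + t*q.1 = z.1 := by linear_combination htd
  refine Prod.ext ?_ ?_ <;>
    simp only [Prod.fst_add, Prod.snd_add, Prod.smul_fst, Prod.smul_snd, smul_eq_mul]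
  · exact hfst
  · rw [hp2, hq2, hzl]; linear_combination m*hfst


theorem stmt16 (r τ m b : ℝ) (hτ : τ ≠ 0) (p q : ℝ × ℝ) (hpq : p ≠ q)
    (hS : setS1 r τ ∩ setS2 m b = {p, q}) :
    convexHull ℝ (setS1 r τ ∩ setS2 m b) = segment ℝ p q ∧
    convexHull ℝ (setS1 r τ ∩ setS2 m b) = convexHull ℝ (setS1 r τ) ∩ setS2 m b := by
  have hp : p ∈ setS1 r τ ∩ setS2 m b := by rw [hS]; left; rfl
  have hq : q ∈ setS1 r τ ∩ setS2 m b := by rw [hS]; right; rfl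
  have hfirst : convexHull ℝ (setS1 r τ ∩ setS2 m b) = segment ℝ p q := by
    rw [hS, convexHull_pair]
  refine ⟨hfirst, ?_⟩
  rw [hfirst]
  apply Subset.antisymm
  · exact subset_inter
      ((convex_convexHull ℝ _).segment_subset
        (subset_convexHull ℝ _ hp.1) (subset_convexHull ℝ _ hq.1))
      ((convex_S2 m b).segment_subset hp.2 hq.2)
  · rintro z ⟨hz1, hz2⟩
    have hpEq : (p.1 - r) * p.2 = τ := hp.1.2
    have hqEq : (q.1 - r) * q.2 = τ := hq.1.2
    have hp2 : p.2 = m*p.1 + b := by have := hp.2.2; linarith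
    have hq2 : q.2 = m*q.1 + b := by have := hq.2.2; linarith
    have hz2' : z.2 = m*z.1 + b := by have := hz2.2; linarith
    have hne : p.1 ≠ q.1 := by
      intro h
      exact hpq (Prod.ext h (by rw [hp2, hq2, h]))
    have hpEq' : (p.1 - r)*(m*p.1 + b) = τ := by rw [← hp2]; exact hpEq
    have hqEq' : (q.1 - r)*(m*q.1 + b) = τ := by rw [← hq2]; exact hqEq
    -- coefficients of the quadratic
    have hd : p.1 - q.1 ≠ 0 := sub_ne_zero.mpr hne
    have h1 : m*(p.1 + q.1) + b - m*r = 0 := by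
      have h : (p.1 - q.1) * (m*(p.1 + q.1) + b - m*r) = (p.1 - q.1) * 0 := by
        linear_combination hpEq' - hqEq'
      exact mul_left_cancel₀ hd h
    have h2 : r*b + τ = -(m*(p.1*q.1)) := by
      linear_combination (-1)*hpEq' + p.1*h1
    have hm0 : m ≠ 0 := by
      intro h
      rw [h] at h1 h2
      simp at h1
      rw [h1] at h2
      simp at h2
      exact hτ h2
    have fact : ∀ x : ℝ, (x - r)*(m*x + b) - τ = m*(x - p.1)*(x - q.1) := by
      intro x
      linear_combination x*h1 - h2
    have hd2 : (0:ℝ) < (p.1 - q.1)^2 := by positivity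
    -- midpoint of p q lies in the hull of S1
    have hmidmem : (1/2:ℝ)•p + (1/2:ℝ)•q ∈ convexHull ℝ (setS1 r τ) :=
      (convex_convexHull ℝ _) (subset_convexHull ℝ _ hp.1) (subset_convexHull ℝ _ hq.1)
        (by norm_num) (by norm_num) (by norm_num)
    have hzz : (z.1 - p.1)*(z.1 - q.1) ≤ 0 := by
      rcases hτ.lt_or_gt with hneg | hpos
      · -- τ < 0
        have hhull := convexHull_min
          (fun w hw => ⟨hw.1.2.1, hw.2.le⟩ :
            setS1 r τ ⊆ {w : ℝ × ℝ | 0 ≤ w.2 ∧ (w.1 - r) * w.2 ≤ τ})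
          (convex_Cneg r τ hneg)
        have hzC : (z.1 - r) * z.2 ≤ τ := (hhull hz1).2
        have hmidC := (hhull hmidmem).2
        simp only [Prod.fst_add, Prod.snd_add, Prod.smul_fst, Prod.smul_snd,
          smul_eq_mul] at hmidC
        -- hmidC : (1/2*p.1 + 1/2*q.1 - r) * (1/2*p.2 + 1/2*q.2) ≤ τ
        have hmid' : m*((p.1+q.1)/2 - p.1)*((p.1+q.1)/2 - q.1) ≤ 0 := by
          have hfac := fact ((p.1+q.1)/2)
          rw [hp2, hq2] at hmidC
          nlinarith [hmidC, hfac]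
        have hmpos : 0 < m := by
          rcases hm0.lt_or_gt with h | h
          · exfalso; nlinarith
          · exact h
        have hzfac := fact z.1
        rw [← hz2'] at hzfac
        nlinarith
      · -- 0 < τ
        have hhull := convexHull_min
          (fun w hw => ⟨hw.1.2.1, hw.2.ge⟩ :
            setS1 r τ ⊆ {w : ℝ × ℝ | 0 ≤ w.2 ∧ τ ≤ (w.1 - r) * w.2})
          (convex_Cpos r τ hpos)
        have hzC : τ ≤ (z.1 - r) * z.2 := (hhull hz1).2
        have hmidC := (hhull hmidmem).2
        simp only [Prod.fst_add, Prod.snd_add, Prod.smul_fst, Prod.smul_snd,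
          smul_eq_mul] at hmidC
        have hmid' : 0 ≤ m*((p.1+q.1)/2 - p.1)*((p.1+q.1)/2 - q.1) := by
          have hfac := fact ((p.1+q.1)/2)
          rw [hp2, hq2] at hmidC
          nlinarith [hmidC, hfac]
        have hmneg : m < 0 := by
          rcases hm0.lt_or_gt with h | h
          · exact h
          · exfalso; nlinarith
        have hzfac := fact z.1
        rw [← hz2'] at hzfac
        nlinarith
    exact mem_seg m b p q z hne hp2 hq2 hz2' hzz
end
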